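/- Under the Arnoldi relation A V_m = V_{m+1} H̄_m with H_m invertible, the generalized eigenvalue problem θ H̄_m^T H̄_m g = H_m^T g is equivalent to the standard eigenvalue problem (H_m + h_{m+1,m}^2 H_m^{-T} e_m e_m^T) g = θ^{-1} g for θ ≠ 0: g solves the first with value θ if and only if g solves the second with value θ^{-1}. -/

import Mathlib

open Matrix

theorem stmt3 {n : ℕ}
    (Hbar : Matrix (Fin (n + 2)) (Fin (n + 1)) ℝ)
    (H : Matrix (Fin (n + 1)) (Fin (n + 1)) ℝ)
    (hH : H = Hbar.submatrix Fin.castSucc id)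
    (hhess : ∀ (i : Fin (n + 2)) (j : Fin (n + 1)), (j : ℕ) + 1 < (i : ℕ) → Hbar i j = 0)
    (hlastrow : ∀ j : Fin (n + 1), j ≠ Fin.last n → Hbar (Fin.last (n + 1)) j = 0)
    (hinv : IsUnit H.det)
    (θ : ℝ) (hθ : θ ≠ 0) (g : Fin (n + 1) → ℝ) (hg : g ≠ 0) :
    θ • (Hbarᵀ * Hbar).mulVec g = Hᵀ.mulVec g ↔
      (H + Hbar (Fin.last (n + 1)) (Fin.last n) ^ 2 •
          (Hᵀ⁻¹ * Matrix.single (Fin.last n) (Fin.last n) (1 : ℝ))).mulVec g =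
        θ⁻¹ • g := by
  set h := Hbar (Fin.last (n + 1)) (Fin.last n) with hh
  set E := Matrix.single (Fin.last n) (Fin.last n) (1 : ℝ) with hE
  have hdetT : IsUnit Hᵀ.det := by rwa [Matrix.det_transpose]
  haveI : Invertible Hᵀ := Matrix.invertibleOfIsUnitDet _ hdetT
  have hinj : Function.Injective Hᵀ.mulVec := Matrix.mulVec_injective_of_invertible _
  have hlast : ∀ i : Fin (n + 1), Hbar (Fin.last (n + 1)) i = if i = Fin.last n then h else 0 := by
    intro i
    by_cases hi : i = Fin.last n
    · simp [hi, hh]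
    · simp [hi, hlastrow i hi]
  have hM : Hbarᵀ * Hbar = Hᵀ * H + h ^ 2 • E := by
    ext i j
    simp only [Matrix.mul_apply, Matrix.transpose_apply, Matrix.add_apply, Matrix.smul_apply,
      hH, Matrix.submatrix_apply, id, hE]
    rw [Fin.sum_univ_castSucc]
    rw [hlast i, hlast j]
    by_cases hi : i = Fin.last n <;> by_cases hj : j = Fin.last n <;>
      simp [hi, hj, Matrix.single, sq, Ne.symm]
  have hHN : Hᵀ * (H + h ^ 2 • (Hᵀ⁻¹ * E)) = Hbarᵀ * Hbar := by
    rw [hM, Matrix.mul_add, Matrix.mul_smul, ← Matrix.mul_assoc,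
      Matrix.mul_nonsing_inv _ hdetT, Matrix.one_mul]
  constructor
  · intro heq
    have h2 : Hᵀ.mulVec ((H + h ^ 2 • (Hᵀ⁻¹ * E)).mulVec g) =
        Hᵀ.mulVec (θ⁻¹ • g) := by
      rw [Matrix.mulVec_mulVec, hHN, Matrix.mulVec_smul]
      rw [← heq]
      rw [smul_smul, inv_mul_cancel₀ hθ, one_smul]
    exact hinj h2
  · intro heq
    have h2 : Hᵀ.mulVec ((H + h ^ 2 • (Hᵀ⁻¹ * E)).mulVec g) = Hᵀ.mulVec (θ⁻¹ • g) := by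
      rw [heq]
    rw [Matrix.mulVec_mulVec, hHN] at h2
    calc θ • (Hbarᵀ * Hbar).mulVec g = θ • Hᵀ.mulVec (θ⁻¹ • g) := by rw [h2]
    _ = Hᵀ.mulVec g := by
        rw [Matrix.mulVec_smul, smul_smul, mul_inv_cancel₀ hθ, one_smul]
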